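/- For every k ∈ ℕ there exists a constant c > 0 (independent of ξ and f) such that: for every compactly supported function f : ℝ → ℂ of class C^k and every ξ > 0, there exists a continuous, integrable function ψ : ℝ → ℂ such that the Fourier transform ψ̂ is supported in [-ξ, ξ], ‖ψ̂‖_∞ ≤ c, and ‖f − f ∗ ψ‖_∞ ≤ c · ‖f‖_{C^k} · ξ^{−k}. -/

import Mathlib

open MeasureTheory FourierTransform

namespace Stmt0Aux

open Real Complex Set Finset Filter

noncomputable section

/-- iterated derivative of the zero function -/
lemma iteratedDeriv_zero_fun' (m : ℕ) : iteratedDeriv m (fun _ : ℝ => (0:ℂ)) = 0 := by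
  induction m with
  | zero => ext x; simp [iteratedDeriv_zero, Finset.sum_range_one]
  | succ m ih =>
    ext x
    rw [iteratedDeriv_succ, ih]
    rw [Pi.zero_def]
    simp

lemma iteratedDeriv_one_fun (j : ℕ) (hj : j ≠ 0) (x : ℝ) :
    iteratedDeriv j (fun _ : ℝ => (1:ℂ)) x = 0 := by
  obtain ⟨m, rfl⟩ := Nat.exists_eq_succ_of_ne_zero hj
  rw [iteratedDeriv_succ']
  have : deriv (fun _ : ℝ => (1:ℂ)) = fun _ : ℝ => (0:ℂ) := by
    ext y; simp
  rw [this, iteratedDeriv_zero_fun']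
  rfl

/-- Within iterated derivative equals global one for globally smooth functions. -/
lemma iteratedDerivWithin_eq_global {n m : ℕ} {f : ℝ → ℂ} (hf : ContDiff ℝ (n : ℕ∞) f)
    (hmn : m ≤ n) {s : Set ℝ} (hs : UniqueDiffOn ℝ s) {x : ℝ} (hx : x ∈ s) :
    iteratedDerivWithin m f s x = iteratedDeriv m f x := by
  have h : HasFTaylorSeriesUpToOn (n : ℕ∞) f (ftaylorSeries ℝ f) s :=
    (contDiff_iff_ftaylorSeries.1 hf).hasFTaylorSeriesUpToOn s
  have h2 : ftaylorSeries ℝ f x m = iteratedFDerivWithin ℝ m f s x :=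
    h.eq_iteratedFDerivWithin_of_uniqueDiffOn (by exact_mod_cast hmn) hs hx
  rw [iteratedDerivWithin_eq_iteratedFDerivWithin, iteratedDeriv_eq_iteratedFDeriv, ← h2]
  rfl

/-- Two-sided Taylor remainder bound for globally `C^{n+1}` functions. -/
lemma taylor_bound {n : ℕ} {f : ℝ → ℂ} (hf : ContDiff ℝ ((n + 1 : ℕ) : ℕ∞) f) {D : ℝ}
    (hD : ∀ s, ‖iteratedDeriv (n + 1) f s‖ ≤ D) (x y : ℝ) :
    ‖f (x - y) - ∑ j ∈ Finset.range (n + 1),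
        (((j.factorial : ℝ))⁻¹ * (-y) ^ j) • iteratedDeriv j f x‖
      ≤ D * |y| ^ (n + 1) / n.factorial := by
  have hD0 : 0 ≤ D := le_trans (norm_nonneg _) (hD 0)
  rcases lt_trichotomy y 0 with hy | hy | hy
  · -- y < 0, so x < x - y
    have hlt : x < x - y := by linarith
    have hs := uniqueDiffOn_Icc hlt
    have hco : ContDiffOn ℝ ((n : ℕ∞) + 1) f (Set.Icc x (x - y)) := by
      exact_mod_cast hf.contDiffOn
    have hbound : ∀ z ∈ Set.Icc x (x - y),
        ‖iteratedDerivWithin (n + 1) f (Set.Icc x (x - y)) z‖ ≤ D := fun z hz => by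
      rw [iteratedDerivWithin_eq_global hf le_rfl hs hz]; exact hD z
    have hmain := taylor_mean_remainder_bound hlt.le hco (right_mem_Icc.2 hlt.le) hbound
    rw [taylor_within_apply] at hmain
    have hsum : ∑ j ∈ Finset.range (n + 1),
        (((j.factorial : ℝ))⁻¹ * ((x - y) - x) ^ j) •
          iteratedDerivWithin j f (Set.Icc x (x - y)) x
        = ∑ j ∈ Finset.range (n + 1),
        (((j.factorial : ℝ))⁻¹ * (-y) ^ j) • iteratedDeriv j f x := by
      refine Finset.sum_congr rfl fun j hj => ?_
      rw [iteratedDerivWithin_eq_global hf ((Finset.mem_range.1 hj).le) hs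
        (left_mem_Icc.2 hlt.le)]
      ring_nf
    rw [hsum] at hmain
    have : (x - y - x) = -y := by ring
    rw [this] at hmain
    calc ‖f (x - y) - ∑ j ∈ Finset.range (n + 1),
        (((j.factorial : ℝ))⁻¹ * (-y) ^ j) • iteratedDeriv j f x‖
        ≤ D * (-y) ^ (n + 1) / n.factorial := hmain
      _ = D * |y| ^ (n + 1) / n.factorial := by rw [abs_of_neg hy]
  · -- y = 0
    subst hy
    have hsum : ∑ j ∈ Finset.range (n + 1),
        (((j.factorial : ℝ))⁻¹ * (-(0:ℝ)) ^ j) • iteratedDeriv j f x = f x := by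
      rw [Finset.sum_eq_single 0]
      · simp [iteratedDeriv_zero, Finset.sum_range_one]
      · intro b _ hb
        simp [zero_pow hb]
      · intro h; exact absurd (Finset.mem_range.2 (Nat.succ_pos n)) h
    rw [hsum]
    simp
  · -- 0 < y : reflect
    set g : ℝ → ℂ := fun t => f (2 * x - t) with hg_def
    have hgid : ∀ j : ℕ, ∀ t : ℝ, iteratedDeriv j g t = (-1 : ℝ) ^ j • iteratedDeriv j f (2 * x - t) := by
      intro j t
      have h1 : g = (fun u => f (2 * x + u)) ∘ (fun t : ℝ => -t) := by
        ext u; simp [hg_def, sub_eq_add_neg]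
      rw [h1]
      have := iteratedDeriv_comp_neg j (fun u => f (2 * x + u)) t
      rw [Function.comp_def]
      simp only [this]
      rw [iteratedDeriv_comp_const_add]
      norm_num [sub_eq_add_neg]
    have hg : ContDiff ℝ ((n + 1 : ℕ) : ℕ∞) g :=
      hf.comp ((contDiff_const (c := 2 * x)).sub contDiff_id)
    have hDg : ∀ s, ‖iteratedDeriv (n + 1) g s‖ ≤ D := fun s => by
      rw [hgid (n + 1) s, norm_smul]
      simp only [norm_pow, norm_neg, norm_one, one_pow, one_mul]
      exact hD _
    have hlt : x < x + y := by linarith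
    have hs := uniqueDiffOn_Icc hlt
    have hco : ContDiffOn ℝ ((n : ℕ∞) + 1) g (Set.Icc x (x + y)) := by
      exact_mod_cast hg.contDiffOn
    have hbound : ∀ z ∈ Set.Icc x (x + y),
        ‖iteratedDerivWithin (n + 1) g (Set.Icc x (x + y)) z‖ ≤ D := fun z hz => by
      rw [iteratedDerivWithin_eq_global hg le_rfl hs hz]; exact hDg z
    have hmain := taylor_mean_remainder_bound hlt.le hco (right_mem_Icc.2 hlt.le) hbound
    rw [taylor_within_apply] at hmain
    have hgval : g (x + y) = f (x - y) := by simp [hg_def]; ring_nf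
    have hsum : ∑ j ∈ Finset.range (n + 1),
        (((j.factorial : ℝ))⁻¹ * ((x + y) - x) ^ j) •
          iteratedDerivWithin j g (Set.Icc x (x + y)) x
        = ∑ j ∈ Finset.range (n + 1),
        (((j.factorial : ℝ))⁻¹ * (-y) ^ j) • iteratedDeriv j f x := by
      refine Finset.sum_congr rfl fun j hj => ?_
      rw [iteratedDerivWithin_eq_global hg ((Finset.mem_range.1 hj).le) hs
        (left_mem_Icc.2 hlt.le), hgid j x]
      have : 2 * x - x = x := by ring
      rw [this, smul_smul]
      congr 1
      have : (x + y) - x = y := by ring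
      rw [this]
      rw [neg_pow y j]
      ring
    rw [hsum, hgval] at hmain
    calc ‖f (x - y) - ∑ j ∈ Finset.range (n + 1),
        (((j.factorial : ℝ))⁻¹ * (-y) ^ j) • iteratedDeriv j f x‖
        ≤ D * ((x + y) - x) ^ (n + 1) / n.factorial := hmain
      _ = D * |y| ^ (n + 1) / n.factorial := by
          rw [abs_of_pos hy]; ring_nf

/-- The fixed bump function. -/
def bump : ContDiffBump (0 : ℝ) := ⟨1/2, 1, by norm_num, by norm_num⟩

def χ : ℝ → ℂ := fun x => ((bump x : ℝ) : ℂ)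

lemma χ_smooth : ContDiff ℝ ((⊤:ℕ∞) : WithTop ℕ∞) χ :=
  Complex.ofRealCLM.contDiff.comp bump.contDiff

lemma χ_compactSupport : HasCompactSupport χ := by
  apply HasCompactSupport.intro (isCompact_Icc (a := (-1:ℝ)) (b := 1))
  intro x hx
  have : bump x = 0 := by
    by_contra h
    have : x ∈ Function.support (bump : ℝ → ℝ) := h
    rw [bump.support_eq] at this
    simp only [Metric.mem_ball, Real.dist_eq, sub_zero] at this
    have : |x| < 1 := by simpa [bump] using this
    exact hx ⟨by linarith [neg_abs_le x], by linarith [le_abs_self x]⟩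
  simp [χ, this]

lemma χ_one {x : ℝ} (hx : |x| ≤ 1/2) : χ x = 1 := by
  have : bump x = 1 := bump.one_of_mem_closedBall (by
    simp only [Metric.mem_closedBall, Real.dist_eq, sub_zero]
    simpa [bump] using hx)
  simp [χ, this]

lemma χ_norm_le (x : ℝ) : ‖χ x‖ ≤ 1 := by
  simp only [χ, Complex.norm_real, Real.norm_eq_abs]
  rw [_root_.abs_of_nonneg bump.nonneg]
  exact bump.le_one

lemma χ_supp {x : ℝ} (hx : χ x ≠ 0) : |x| < 1 := by
  have : bump x ≠ 0 := by
    intro h; apply hx; simp [χ, h]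
  have : x ∈ Function.support (bump : ℝ → ℝ) := this
  rw [bump.support_eq] at this
  simp only [Metric.mem_ball, Real.dist_eq, sub_zero] at this
  simpa [bump] using this

/-- The bump as a Schwartz map. -/
def χS : SchwartzMap ℝ ℂ where
  toFun := χ
  smooth' := χ_smooth
  decay' := by
    intro k n
    set g : ℝ → ℝ := fun x => ‖x‖ ^ k * ‖iteratedFDeriv ℝ n χ x‖ with hg
    have hgc : Continuous g :=
      (continuous_norm.pow k).mul (χ_smooth.continuous_iteratedFDeriv (by exact_mod_cast (le_top : (n:ℕ∞) ≤ ⊤))).norm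
    have hgsupp : HasCompactSupport g := by
      apply HasCompactSupport.intro χ_compactSupport
      intro x hx
      have : iteratedFDeriv ℝ n χ x = 0 := by
        by_contra h
        exact hx (support_iteratedFDeriv_subset n h)
      simp [hg, this]
    obtain ⟨C, hC⟩ := hgc.bounded_above_of_compact_support hgsupp
    exact ⟨C, fun x => le_trans (le_abs_self _) (hC x)⟩

/-- ψ₁ = inverse Fourier transform of the bump. -/
def ψ₁ : SchwartzMap ℝ ℂ := (FourierTransform.fourierCLE ℂ (SchwartzMap ℝ ℂ)).symm χS

lemma fourier_ψ₁ : 𝓕 ⇑ψ₁ = ⇑χS := by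
  have h := (FourierTransform.fourierCLE ℂ (SchwartzMap ℝ ℂ)).apply_symm_apply χS
  calc 𝓕 ⇑ψ₁ = ⇑((FourierTransform.fourierCLE ℂ (SchwartzMap ℝ ℂ)) ψ₁) :=
        (congrArg DFunLike.coe (FourierTransform.fourierCLE_apply (R := ℂ) (E := SchwartzMap ℝ ℂ) ψ₁)).symm
    _ = ⇑χS := by simp only [ψ₁, h]

lemma fourier_at_zero (g : ℝ → ℂ) : 𝓕 g 0 = ∫ v : ℝ, g v := by
  rw [Real.fourier_real_eq]
  simp

lemma ψ₁_pow_integrable (j : ℕ) : Integrable (fun u : ℝ => (u : ℂ) ^ j * ψ₁ u) := by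
  apply Integrable.mono' (ψ₁.integrable_pow_mul volume j)
    (((Complex.continuous_ofReal.pow j).mul ψ₁.continuous).aestronglyMeasurable)
  filter_upwards with u
  simp [norm_mul, abs_pow]

lemma ψ₁_moment_zero {j : ℕ} (hj : j ≠ 0) : (∫ u : ℝ, (u : ℂ) ^ j * ψ₁ u) = 0 := by
  have hInt : ∀ (m : ℕ), (m : ℕ∞) ≤ (⊤ : ℕ∞) →
      Integrable (fun x : ℝ => x ^ m • (ψ₁ x : ℂ)) volume := by
    intro m _
    apply Integrable.mono' (ψ₁.integrable_pow_mul volume m)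
      (((continuous_pow m).smul ψ₁.continuous).aestronglyMeasurable)
    filter_upwards with u
    simp [norm_smul, abs_pow]
  have hd := Real.iteratedDeriv_fourier (f := ⇑ψ₁) (N := (⊤ : ℕ∞)) (n := j)
    (by exact_mod_cast hInt) le_top
  rw [fourier_ψ₁] at hd
  have hL : iteratedDeriv j (⇑χS) 0 = 0 := by
    have heq : (⇑χS : ℝ → ℂ) =ᶠ[nhds (0:ℝ)] fun _ => (1 : ℂ) := by
      filter_upwards [Metric.closedBall_mem_nhds (0:ℝ) (by norm_num : (0:ℝ) < 1/2)] with x hx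
      have : |x| ≤ 1/2 := by
        simpa [Real.dist_eq] using Metric.mem_closedBall.1 hx
      exact χ_one this
    rw [heq.iteratedDeriv_eq j]
    exact iteratedDeriv_one_fun j hj 0
  have hR : 𝓕 (fun x : ℝ => (-2 * (π:ℂ) * Complex.I * (x:ℂ)) ^ j • ψ₁ x) 0
      = (-2 * (π:ℂ) * Complex.I) ^ j * ∫ u : ℝ, (u : ℂ) ^ j * ψ₁ u := by
    rw [fourier_at_zero]
    rw [← MeasureTheory.integral_const_mul]
    congr 1
    ext u
    simp only [smul_eq_mul, mul_pow]
    ring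
  have h0 : (0 : ℂ) = (-2 * (π:ℂ) * Complex.I) ^ j * ∫ u : ℝ, (u : ℂ) ^ j * ψ₁ u := by
    rw [← hR, ← hd, hL]
  have hne : (-2 * (π:ℂ) * Complex.I) ^ j ≠ 0 := by
    apply pow_ne_zero
    exact mul_ne_zero (mul_ne_zero (by norm_num) (Complex.ofReal_ne_zero.2 Real.pi_ne_zero))
      Complex.I_ne_zero
  rcases mul_eq_zero.1 h0.symm with h | h
  · exact absurd h hne
  · exact h

end

end Stmt0Aux

open Stmt0Aux

/-- Approximation lemma (Lemma 5 of the paper): for every `k ∈ ℕ` there is a constant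
`c > 0`, independent of `ξ` and `f`, such that for every compactly supported `C^k`
function `f : ℝ → ℂ` and every `ξ > 0` there is a continuous integrable `ψ` whose
Fourier transform is supported in `[-ξ, ξ]` and bounded by `c`, with
`‖f - f ∗ ψ‖_∞ ≤ c ‖f‖_{C^k} ξ^{-k}`. -/
theorem stmt_0 (k : ℕ) :
    ∃ c > (0 : ℝ), ∀ f : ℝ → ℂ, ContDiff ℝ k f → HasCompactSupport f →
      ∀ ξ : ℝ, 0 < ξ →
        ∃ ψ : ℝ → ℂ, Continuous ψ ∧ Integrable ψ ∧
          Function.support (𝓕 ψ) ⊆ Set.Icc (-ξ) ξ ∧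
          (∀ t : ℝ, ‖𝓕 ψ t‖ ≤ c) ∧
          (∀ x : ℝ, ‖f x - ∫ y : ℝ, f (x - y) * ψ y‖ ≤
            c * (∑ i ∈ Finset.range (k + 1), ⨆ s : ℝ, ‖iteratedDeriv i f s‖)
              * ξ ^ (-(k : ℝ))) := by
  cases k with
  | zero =>
    refine ⟨1, one_pos, fun f hf hsupp ξ hξ => ?_⟩
    have h0 : 𝓕 (fun _ : ℝ => (0 : ℂ)) = fun _ => 0 := by
      funext t
      rw [Real.fourier_real_eq]
      simp
    refine ⟨fun _ => 0, continuous_const, integrable_zero _ _ _, ?_, ?_, ?_⟩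
    · rw [h0]
      intro t ht
      simp at ht
    · intro t; rw [h0]; simp
    · intro x
      have hsum1 : ∑ i ∈ Finset.range (0 + 1), ⨆ s : ℝ, ‖iteratedDeriv i f s‖
          = ⨆ s : ℝ, ‖f s‖ := by
        rw [Finset.sum_range_one, iteratedDeriv_zero]
      simp only [mul_zero, integral_zero, sub_zero, Nat.cast_zero, neg_zero,
        Real.rpow_zero, mul_one, one_mul, hsum1]
      obtain ⟨C, hC⟩ := hf.continuous.bounded_above_of_compact_support hsupp
      exact le_ciSup ⟨C, by rintro _ ⟨z, rfl⟩; exact hC z⟩ x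
  | succ n =>
    set M : ℝ := ∫ u : ℝ, |u| ^ (n + 1) * ‖ψ₁ u‖ with hM_def
    have hM0 : 0 ≤ M := integral_nonneg fun u => by positivity
    set c : ℝ := max 1 (M / n.factorial + 1) with hc_def
    have hc1 : (1 : ℝ) ≤ c := le_max_left _ _
    have hcM : M / n.factorial ≤ c := le_trans (by linarith) (le_max_right _ _)
    refine ⟨c, lt_of_lt_of_le one_pos hc1, ?_⟩
    intro f hf hsupp ξ hξ
    have hξ0 : ξ ≠ 0 := hξ.ne'
    have hξc0 : ((ξ : ℂ)) ≠ 0 := Complex.ofReal_ne_zero.2 hξ0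
    set ψ : ℝ → ℂ := fun y => (ξ : ℂ) * ψ₁ (ξ * y) with hψ_def
    have hψcont : Continuous ψ :=
      continuous_const.mul (ψ₁.continuous.comp (continuous_const.mul continuous_id))
    have hψint : Integrable ψ := (ψ₁.integrable.comp_mul_left' hξ0).const_mul _
    -- Fourier transform of ψ
    have hF : ∀ t : ℝ, 𝓕 ψ t = χS (t / ξ) := by
      intro t
      set g : ℝ → ℂ := fun u => 𝐞 (-(u * (t / ξ))) • ψ₁ u with hg_def
      have heq : ∀ v : ℝ, 𝐞 (-(v * t)) • ψ v = (ξ : ℂ) * g (ξ * v) := by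
        intro v
        have harg : ξ * v * (t / ξ) = v * t := by field_simp
        simp only [hg_def, harg, hψ_def, Circle.smul_def, smul_eq_mul]
        ring
      rw [Real.fourier_real_eq]
      calc (∫ v : ℝ, 𝐞 (-(v * t)) • ψ v)
          = ∫ v : ℝ, (ξ : ℂ) * g (ξ * v) := integral_congr_ae (.of_forall heq)
        _ = (ξ : ℂ) * ∫ v : ℝ, g (ξ * v) := MeasureTheory.integral_const_mul _ _
        _ = (ξ : ℂ) * ((|ξ⁻¹| : ℝ) • ∫ u : ℝ, g u) := by
            rw [MeasureTheory.Measure.integral_comp_mul_left g ξ]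
        _ = ∫ u : ℝ, g u := by
            rw [abs_of_pos (inv_pos.2 hξ), Complex.real_smul, ← mul_assoc]
            push_cast
            rw [mul_inv_cancel₀ hξc0, one_mul]
        _ = χS (t / ξ) := by
            rw [hg_def, ← Real.fourier_real_eq, fourier_ψ₁]
    have hχScoe : (⇑χS : ℝ → ℂ) = χ := rfl
    -- support
    have hsupp𝓕 : Function.support (𝓕 ψ) ⊆ Set.Icc (-ξ) ξ := by
      intro t ht
      have ht' : χ (t / ξ) ≠ 0 := by
        rw [← hχScoe, ← hF t]; exact ht
      have h2 := χ_supp ht'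
      rw [abs_div, abs_of_pos hξ, div_lt_one hξ] at h2
      exact ⟨by linarith [neg_abs_le t], by linarith [le_abs_self t]⟩
    -- bound on Fourier transform
    have hFb : ∀ t : ℝ, ‖𝓕 ψ t‖ ≤ c := fun t => by
      rw [hF t, hχScoe]
      exact le_trans (χ_norm_le _) hc1
    -- integral of ψ is 1
    have hψ1 : (∫ y : ℝ, ψ y) = 1 := by
      have h2 := hF 0
      rw [fourier_at_zero, hχScoe] at h2
      rw [h2, zero_div]
      exact χ_one (by norm_num)
    -- moments vanish
    have hmom : ∀ j : ℕ, j ≠ 0 → (∫ y : ℝ, (y : ℂ) ^ j * ψ y) = 0 := by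
      intro j hj
      set g : ℝ → ℂ := fun u => (u : ℂ) ^ j * ψ₁ u with hg_def
      have key : ∀ y : ℝ, (ξ : ℂ) ^ j * ((y : ℂ) ^ j * ψ y) = (ξ : ℂ) * g (ξ * y) := by
        intro y
        simp only [hg_def, hψ_def]
        push_cast
        ring
      have h1 : (ξ : ℂ) ^ j * (∫ y : ℝ, (y : ℂ) ^ j * ψ y) = 0 := by
        rw [← MeasureTheory.integral_const_mul]
        calc (∫ y : ℝ, (ξ : ℂ) ^ j * ((y : ℂ) ^ j * ψ y))
            = ∫ y : ℝ, (ξ : ℂ) * g (ξ * y) := integral_congr_ae (.of_forall key)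
          _ = (ξ : ℂ) * ∫ y : ℝ, g (ξ * y) := MeasureTheory.integral_const_mul _ _
          _ = (ξ : ℂ) * ((|ξ⁻¹| : ℝ) • ∫ u : ℝ, g u) := by
              rw [MeasureTheory.Measure.integral_comp_mul_left g ξ]
          _ = 0 := by rw [hg_def]; rw [ψ₁_moment_zero hj]; simp
      exact (mul_eq_zero.1 h1).resolve_left (pow_ne_zero _ hξc0)
    -- integrability of moments of ψ
    have hjint : ∀ j : ℕ, Integrable (fun y : ℝ => (y : ℂ) ^ j * ψ y) := by
      intro j
      set g : ℝ → ℂ := fun u => (u : ℂ) ^ j * ψ₁ u with hg_def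
      have h2 : Integrable (fun y : ℝ => ((ξ : ℂ) * ((ξ : ℂ) ^ j)⁻¹) * g (ξ * y)) :=
        ((ψ₁_pow_integrable j).comp_mul_left' hξ0).const_mul _
      have h3 : (fun y : ℝ => (y : ℂ) ^ j * ψ y)
          = fun y : ℝ => ((ξ : ℂ) * ((ξ : ℂ) ^ j)⁻¹) * g (ξ * y) := by
        funext y
        simp only [hg_def, hψ_def]
        push_cast
        field_simp
        ring
      rw [h3]; exact h2
    -- absolute moment
    set Mg : ℝ → ℝ := fun u => |u| ^ (n + 1) * ‖ψ₁ u‖ with hMg_def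
    have hMgint : Integrable Mg := by
      have := ψ₁.integrable_pow_mul volume (n + 1)
      simpa [hMg_def, Real.norm_eq_abs] using this
    have habs_eq : ∀ y : ℝ, |y| ^ (n + 1) * ‖ψ y‖ = (ξ * (ξ ^ (n + 1))⁻¹) * Mg (ξ * y) := by
      intro y
      simp only [hMg_def, hψ_def, norm_mul, Complex.norm_real, Real.norm_eq_abs, abs_mul,
        abs_of_pos hξ, mul_pow]
      field_simp
    have habsint : Integrable (fun y : ℝ => |y| ^ (n + 1) * ‖ψ y‖) := by
      rw [funext habs_eq]
      exact (hMgint.comp_mul_left' hξ0).const_mul _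
    have habsval : (∫ y : ℝ, |y| ^ (n + 1) * ‖ψ y‖) = M / ξ ^ (n + 1) := by
      calc (∫ y : ℝ, |y| ^ (n + 1) * ‖ψ y‖)
          = ∫ y : ℝ, (ξ * (ξ ^ (n + 1))⁻¹) * Mg (ξ * y) :=
            integral_congr_ae (.of_forall habs_eq)
        _ = (ξ * (ξ ^ (n + 1))⁻¹) * ∫ y : ℝ, Mg (ξ * y) := MeasureTheory.integral_const_mul _ _
        _ = (ξ * (ξ ^ (n + 1))⁻¹) * ((|ξ⁻¹| : ℝ) • ∫ u : ℝ, Mg u) := by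
            rw [MeasureTheory.Measure.integral_comp_mul_left Mg ξ]
        _ = M / ξ ^ (n + 1) := by
            rw [abs_of_pos (inv_pos.2 hξ), smul_eq_mul, ← hM_def]
            field_simp
    -- sup bounds
    have hcont : Continuous (iteratedDeriv (n + 1) f) :=
      hf.continuous_iteratedDeriv (n + 1) le_rfl
    have hcs : HasCompactSupport (iteratedDeriv (n + 1) f) := by
      apply HasCompactSupport.intro hsupp
      intro z hz
      rw [iteratedDeriv_eq_iteratedFDeriv]
      have h2 : iteratedFDeriv ℝ (n + 1) f z = 0 := by
        by_contra h
        exact hz (support_iteratedFDeriv_subset (n + 1) h)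
      rw [h2]
      rfl
    obtain ⟨CD, hCD⟩ := hcont.bounded_above_of_compact_support hcs
    have hiDbdd : BddAbove (Set.range fun s : ℝ => ‖iteratedDeriv (n + 1) f s‖) :=
      ⟨CD, by rintro _ ⟨z, rfl⟩; exact hCD z⟩
    set D : ℝ := ⨆ s : ℝ, ‖iteratedDeriv (n + 1) f s‖ with hD_def
    have hD : ∀ s, ‖iteratedDeriv (n + 1) f s‖ ≤ D := fun s => le_ciSup hiDbdd s
    have hD0 : 0 ≤ D := le_trans (norm_nonneg _) (hD 0)
    set S : ℝ := ∑ i ∈ Finset.range (n + 1 + 1), ⨆ s : ℝ, ‖iteratedDeriv i f s‖ with hS_def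
    have hDS : D ≤ S :=
      Finset.single_le_sum (f := fun i => ⨆ s : ℝ, ‖iteratedDeriv i f s‖)
        (fun i _ => Real.iSup_nonneg fun s => norm_nonneg _)
        (Finset.self_mem_range_succ (n + 1))
    have hS0 : 0 ≤ S := le_trans hD0 hDS
    refine ⟨ψ, hψcont, hψint, hsupp𝓕, hFb, ?_⟩
    intro x
    set P : ℝ → ℂ := fun y => ∑ j ∈ Finset.range (n + 1),
      (((j.factorial : ℝ))⁻¹ * (-y) ^ j) • iteratedDeriv j f x with hP_def
    have htay : ∀ y : ℝ, ‖f (x - y) - P y‖ ≤ D * |y| ^ (n + 1) / n.factorial := fun y =>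
      taylor_bound (by exact_mod_cast hf) hD x y
    obtain ⟨Cf, hCf⟩ := hf.continuous.bounded_above_of_compact_support hsupp
    have h1 : Integrable (fun y : ℝ => f (x - y) * ψ y) :=
      hψint.bdd_mul
        ((hf.continuous.comp (continuous_const.sub continuous_id)).aestronglyMeasurable)
        (ae_of_all _ fun y => hCf (x - y))
    have hPψ : ∀ y : ℝ, P y * ψ y = ∑ j ∈ Finset.range (n + 1),
        ((((j.factorial : ℝ) : ℂ))⁻¹ * (-1) ^ j * iteratedDeriv j f x)
          * ((y : ℂ) ^ j * ψ y) := by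
      intro y
      rw [hP_def, Finset.sum_mul]
      refine Finset.sum_congr rfl fun j _ => ?_
      rw [smul_mul_assoc, Complex.real_smul]
      push_cast
      ring
    have h2 : Integrable (fun y : ℝ => P y * ψ y) := by
      rw [funext hPψ]
      exact integrable_finset_sum _ (fun j _ => (hjint j).const_mul _)
    have hsplit : (∫ y : ℝ, f (x - y) * ψ y)
        = (∫ y : ℝ, (f (x - y) - P y) * ψ y) + ∫ y : ℝ, P y * ψ y := by
      rw [← integral_add (by simpa [sub_mul, Pi.sub_def] using h1.sub h2) h2]
      congr 1
      funext y
      ring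
    have hPval : (∫ y : ℝ, P y * ψ y) = f x := by
      calc (∫ y : ℝ, P y * ψ y)
          = ∫ y : ℝ, ∑ j ∈ Finset.range (n + 1),
              ((((j.factorial : ℝ) : ℂ))⁻¹ * (-1) ^ j * iteratedDeriv j f x)
                * ((y : ℂ) ^ j * ψ y) := integral_congr_ae (.of_forall hPψ)
        _ = ∑ j ∈ Finset.range (n + 1), ∫ y : ℝ,
              ((((j.factorial : ℝ) : ℂ))⁻¹ * (-1) ^ j * iteratedDeriv j f x)
                * ((y : ℂ) ^ j * ψ y) :=
            integral_finset_sum _ (fun j _ => (hjint j).const_mul _)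
        _ = f x := by
            rw [Finset.sum_eq_single 0]
            · rw [MeasureTheory.integral_const_mul]
              simp only [pow_zero, one_mul, Nat.factorial_zero, Nat.cast_one, inv_one,
                iteratedDeriv_zero]
              rw [hψ1, mul_one]
              push_cast
              ring
            · intro j _ hj
              rw [MeasureTheory.integral_const_mul, hmom j hj, mul_zero]
            · intro h
              exact absurd (Finset.mem_range.2 (Nat.succ_pos n)) h
    have key : f x - (∫ y : ℝ, f (x - y) * ψ y)
        = -(∫ y : ℝ, (f (x - y) - P y) * ψ y) := by
      rw [hsplit, hPval]
      ring
    rw [key, norm_neg]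
    calc ‖∫ y : ℝ, (f (x - y) - P y) * ψ y‖
        ≤ ∫ y : ℝ, ‖(f (x - y) - P y) * ψ y‖ := norm_integral_le_integral_norm _
      _ ≤ ∫ y : ℝ, (D / n.factorial) * (|y| ^ (n + 1) * ‖ψ y‖) := by
          apply integral_mono_of_nonneg (Filter.Eventually.of_forall fun y => norm_nonneg _)
            (habsint.const_mul _)
          filter_upwards with y
          rw [norm_mul]
          calc ‖f (x - y) - P y‖ * ‖ψ y‖
              ≤ (D * |y| ^ (n + 1) / n.factorial) * ‖ψ y‖ :=
                mul_le_mul_of_nonneg_right (htay y) (norm_nonneg _)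
            _ = (D / n.factorial) * (|y| ^ (n + 1) * ‖ψ y‖) := by ring
      _ = (D / n.factorial) * (M / ξ ^ (n + 1)) := by
          rw [MeasureTheory.integral_const_mul, habsval]
      _ ≤ c * S * ξ ^ (-((n + 1 : ℕ) : ℝ)) := by
          rw [Real.rpow_neg hξ.le, Real.rpow_natCast]
          have h4 : D / n.factorial * (M / ξ ^ (n + 1))
              = (M / n.factorial * D) * (ξ ^ (n + 1))⁻¹ := by ring
          rw [h4]
          apply mul_le_mul_of_nonneg_right _ (inv_nonneg.2 (pow_nonneg hξ.le _))
          calc M / n.factorial * D ≤ c * D := mul_le_mul_of_nonneg_right hcM hD0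
            _ ≤ c * S := mul_le_mul_of_nonneg_left hDS (le_trans zero_le_one hc1)
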